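/- Let D be a finite set of positive integers, q : D → ℝ with q_k > 0 for all k ∈ D and Σ_{k∈D} q_k = 1, and δ : D → ℝ with δ_k > 0 for all k. Call x : D → [0,1] a stationary state if δ_k x_k = (1 − x_k) · k · Σ_{i∈D} q_i x_i for every k ∈ D. Then there exists a stationary state x with x_k > 0 for all k ∈ D (an endemic state) if and only if R := Σ_{k∈D} k q_k / δ_k > 1; moreover, when R > 1 the endemic state is unique: any two stationary states that are componentwise positive coincide. -/

import Mathlib

/-- For the degree-based mean-field SIS dynamics, an endemic
stationary state (a stationary state `x : D → [0,1]` with all coordinates strictly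
positive) exists if and only if `R = Σ_k k q_k / δ_k > 1`; moreover when `R > 1`
the endemic state is unique: any two componentwise-positive stationary states coincide. -/
theorem endemic_state_iff_R_gt_one_and_unique
    (D : Finset ℕ) (hD : ∀ k ∈ D, 0 < k)
    (q : ℕ → ℝ) (hq : ∀ k ∈ D, 0 < q k) (hqsum : ∑ k ∈ D, q k = 1)
    (δ : ℕ → ℝ) (hδ : ∀ k ∈ D, 0 < δ k) :
    ((∃ x : ℕ → ℝ,
        (∀ k ∈ D, x k ∈ Set.Icc (0 : ℝ) 1) ∧
        (∀ k ∈ D, δ k * x k = (1 - x k) * (k : ℝ) * ∑ i ∈ D, q i * x i) ∧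
        (∀ k ∈ D, 0 < x k))
      ↔ 1 < ∑ k ∈ D, (k : ℝ) * q k / δ k)
    ∧ (1 < ∑ k ∈ D, (k : ℝ) * q k / δ k →
        ∀ x y : ℕ → ℝ,
          (∀ k ∈ D, x k ∈ Set.Icc (0 : ℝ) 1) →
          (∀ k ∈ D, δ k * x k = (1 - x k) * (k : ℝ) * ∑ i ∈ D, q i * x i) →
          (∀ k ∈ D, 0 < x k) →
          (∀ k ∈ D, y k ∈ Set.Icc (0 : ℝ) 1) →
          (∀ k ∈ D, δ k * y k = (1 - y k) * (k : ℝ) * ∑ i ∈ D, q i * y i) →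
          (∀ k ∈ D, 0 < y k) →
          ∀ k ∈ D, x k = y k) := by
  -- D is nonempty since the q's sum to 1
  have hDne : D.Nonempty := by
    rcases D.eq_empty_or_nonempty with h | h
    · subst h; simp at hqsum
    · exact h
  -- the self-consistency function
  set f : ℝ → ℝ := fun Θ => ∑ i ∈ D, q i * (i : ℝ) / (δ i + (i : ℝ) * Θ) with hfdef
  have hden : ∀ Θ : ℝ, 0 ≤ Θ → ∀ i ∈ D, 0 < δ i + (i : ℝ) * Θ := by
    intro Θ hΘ i hi
    have : (0:ℝ) ≤ (i : ℝ) * Θ := mul_nonneg (Nat.cast_nonneg i) hΘ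
    linarith [hδ i hi]
  -- f is strictly decreasing on [0, ∞)
  have hmono : ∀ a b : ℝ, 0 ≤ a → a < b → f b < f a := by
    intro a b ha hab
    apply Finset.sum_lt_sum_of_nonempty hDne
    intro i hi
    have hipos : (0:ℝ) < (i : ℝ) := by exact_mod_cast hD i hi
    have hnum : (0:ℝ) < q i * (i : ℝ) := mul_pos (hq i hi) hipos
    have hda : 0 < δ i + (i : ℝ) * a := hden a ha i hi
    have hdb : 0 < δ i + (i : ℝ) * b := hden b (le_of_lt (ha.trans_lt hab)) i hi
    have hlt : δ i + (i : ℝ) * a < δ i + (i : ℝ) * b := by nlinarith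
    exact div_lt_div_of_pos_left hnum hda hlt
  -- f 0 = R
  have hf0 : f 0 = ∑ k ∈ D, (k : ℝ) * q k / δ k := by
    apply Finset.sum_congr rfl
    intro k hk
    have : δ k ≠ 0 := ne_of_gt (hδ k hk)
    field_simp
    ring_nf
    rw [mul_inv_cancel_right₀ this]
  -- key characterization of endemic states
  have key : ∀ x : ℕ → ℝ,
      (∀ k ∈ D, x k ∈ Set.Icc (0 : ℝ) 1) →
      (∀ k ∈ D, δ k * x k = (1 - x k) * (k : ℝ) * ∑ i ∈ D, q i * x i) →
      (∀ k ∈ D, 0 < x k) →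
      0 < (∑ i ∈ D, q i * x i) ∧ f (∑ i ∈ D, q i * x i) = 1 ∧
      ∀ k ∈ D, x k = (k : ℝ) * (∑ i ∈ D, q i * x i)
          / (δ k + (k : ℝ) * (∑ i ∈ D, q i * x i)) := by
    intro x hx hstat hpos
    set Θ := ∑ i ∈ D, q i * x i with hΘdef
    have hΘpos : 0 < Θ := by
      apply Finset.sum_pos _ hDne
      intro i hi
      exact mul_pos (hq i hi) (hpos i hi)
    have hform : ∀ k ∈ D, x k = (k : ℝ) * Θ / (δ k + (k : ℝ) * Θ) := by
      intro k hk
      have hd : 0 < δ k + (k : ℝ) * Θ := hden Θ hΘpos.le k hk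
      have h := hstat k hk
      rw [eq_div_iff (ne_of_gt hd)]
      nlinarith [h]
    have hfΘ : f Θ = 1 := by
      have : ∀ i ∈ D, q i * (i : ℝ) / (δ i + (i : ℝ) * Θ) = q i * x i / Θ := by
        intro i hi
        rw [hform i hi]
        have hd : δ i + (i : ℝ) * Θ ≠ 0 := ne_of_gt (hden Θ hΘpos.le i hi)
        field_simp
      rw [hfdef]
      simp only []
      rw [Finset.sum_congr rfl this, ← Finset.sum_div, ← hΘdef,
        div_self (ne_of_gt hΘpos)]
    exact ⟨hΘpos, hfΘ, hform⟩
  constructor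
  · constructor
    · -- endemic ⇒ R > 1
      rintro ⟨x, hx, hstat, hpos⟩
      obtain ⟨hΘpos, hfΘ, -⟩ := key x hx hstat hpos
      have := hmono 0 _ le_rfl hΘpos
      rw [hfΘ, hf0] at this
      exact this
    · -- R > 1 ⇒ endemic
      intro hR
      -- f 2 < 1
      have hf2 : f 2 < 1 := by
        have hlt : f 2 < ∑ i ∈ D, q i / 2 := by
          apply Finset.sum_lt_sum_of_nonempty hDne
          intro i hi
          have hipos : (0:ℝ) < (i : ℝ) := by exact_mod_cast hD i hi
          have hd : 0 < δ i + (i : ℝ) * 2 := hden 2 (by norm_num) i hi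
          rw [div_lt_div_iff₀ hd (by norm_num : (0:ℝ) < 2)]
          nlinarith [hq i hi, hδ i hi]
        have : ∑ i ∈ D, q i / 2 = 1 / 2 := by
          rw [← Finset.sum_div, hqsum]
        rw [this] at hlt
        linarith
      -- continuity of f on [0,2]
      have hcont : ContinuousOn f (Set.Icc (0:ℝ) 2) := by
        apply continuousOn_finset_sum
        intro i hi
        apply ContinuousOn.div continuousOn_const
        · exact (continuous_const.add (continuous_const.mul continuous_id)).continuousOn
        · intro Θ hΘ
          exact ne_of_gt (hden Θ hΘ.1 i hi)
      -- IVT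
      have h1mem : (1:ℝ) ∈ Set.Icc (f 2) (f 0) := ⟨hf2.le, by rw [hf0]; exact hR.le⟩
      obtain ⟨Θ, hΘmem, hfΘ⟩ := intermediate_value_Icc' (by norm_num : (0:ℝ) ≤ 2) hcont h1mem
      have hΘpos : 0 < Θ := by
        rcases lt_or_eq_of_le hΘmem.1 with h | h
        · exact h
        · exfalso; rw [← h, hf0] at hfΘ; linarith
      -- build the endemic state
      refine ⟨fun k => (k : ℝ) * Θ / (δ k + (k : ℝ) * Θ), ?_, ?_, ?_⟩ <;>
        [skip; skip; skip]
      · intro k hk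
        have hd : 0 < δ k + (k : ℝ) * Θ := hden Θ hΘpos.le k hk
        constructor
        · positivity
        · rw [div_le_one hd]; linarith [hδ k hk]
      · intro k hk
        have hΘeq : (∑ i ∈ D, q i * ((i : ℝ) * Θ / (δ i + (i : ℝ) * Θ))) = Θ := by
          have : ∀ i ∈ D, q i * ((i : ℝ) * Θ / (δ i + (i : ℝ) * Θ))
              = Θ * (q i * (i : ℝ) / (δ i + (i : ℝ) * Θ)) := by
            intro i hi
            have hd : δ i + (i : ℝ) * Θ ≠ 0 := ne_of_gt (hden Θ hΘpos.le i hi)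
            field_simp
          rw [Finset.sum_congr rfl this, ← Finset.mul_sum]
          have : (∑ i ∈ D, q i * (i : ℝ) / (δ i + (i : ℝ) * Θ)) = f Θ := rfl
          rw [this, hfΘ, mul_one]
        rw [hΘeq]
        have hd : δ k + (k : ℝ) * Θ ≠ 0 := ne_of_gt (hden Θ hΘpos.le k hk)
        field_simp
        ring
      · intro k hk
        have hd : 0 < δ k + (k : ℝ) * Θ := hden Θ hΘpos.le k hk
        have hkpos : (0:ℝ) < (k : ℝ) := by exact_mod_cast hD k hk
        positivity
  · -- uniqueness
    intro _ x y hx hstatx hposx hy hstaty hposy k hk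
    obtain ⟨hΘx, hfx, hformx⟩ := key x hx hstatx hposx
    obtain ⟨hΘy, hfy, hformy⟩ := key y hy hstaty hposy
    have hΘeq : (∑ i ∈ D, q i * x i) = ∑ i ∈ D, q i * y i := by
      by_contra hne
      rcases lt_or_gt_of_ne hne with h | h
      · have := hmono _ _ hΘx.le h; rw [hfx, hfy] at this; exact lt_irrefl _ this
      · have := hmono _ _ hΘy.le h; rw [hfx, hfy] at this; exact lt_irrefl _ this
    rw [hformx k hk, hformy k hk, hΘeq]
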